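/- For all λ ∈ ℂ and nonzero complex z, w such that all theta factors appearing in denominators are nonzero, the R-matrix entries satisfy the two identities: −c(λ+1, z/w) = b(λ, w/(q²z)) / a(λ, w/(q²z)), and d(λ+1, z/w) = 1 / a(λ, w/(q²z)). -/

import Mathlib

noncomputable section

open Finset

/-- The normalized Jacobi theta function `θ(z) = ∏_{j≥0} (1 - z p^j)(1 - p^{j+1}/z)`. -/
def theta (p : ℝ) (z : ℂ) : ℂ :=
  ∏' j : ℕ, ((1 - z * (p : ℂ) ^ j) * (1 - (p : ℂ) ^ (j + 1) / z))

/-- Complex power `q ^ l := exp (l · log q)` for a real base `q`. -/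
def qp (q : ℝ) (l : ℂ) : ℂ := Complex.exp (l * (Real.log q : ℂ))

/-- Elliptic Pochhammer symbol `(a)_n = ∏_{i=0}^{n-1} θ(a q^{2i})` in base `q², p`. -/
def epoch (p q : ℝ) (a : ℂ) (n : ℕ) : ℂ :=
  ∏ i ∈ Finset.range n, theta p (a * qp q (2 * (i : ℂ)))

/-- Elliptic binomial coefficient `[k over l] = ∏_{i=1}^{l} θ(q^{2(k-l+i)})/θ(q^{2i})`. -/
def ellbin (p q : ℝ) (k l : ℕ) : ℂ :=
  ∏ i ∈ Finset.range l,
    theta p (qp q (2 * ((k : ℂ) - (l : ℂ) + (i : ℂ) + 1))) / theta p (qp q (2 * ((i : ℂ) + 1)))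

/-- Entry `a(λ,z)` of the Andrews–Baxter–Forrester `R`-matrix. -/
def Ra (p q : ℝ) (lam z : ℂ) : ℂ :=
  theta p z * theta p (qp q (2 * (lam + 2))) /
    (theta p (qp q 2 * z) * theta p (qp q (2 * (lam + 1))))

/-- Entry `b(λ,z)` of the Andrews–Baxter–Forrester `R`-matrix. -/
def Rb (p q : ℝ) (lam z : ℂ) : ℂ :=
  theta p (qp q 2) * theta p (qp q (-2 * (lam + 1)) * z) /
    (theta p (qp q 2 * z) * theta p (qp q (-2 * (lam + 1))))

/-- Entry `c(λ,z)` of the Andrews–Baxter–Forrester `R`-matrix. -/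
def Rc (p q : ℝ) (lam z : ℂ) : ℂ :=
  theta p (qp q 2) * theta p (qp q (2 * (lam + 1)) * z) /
    (theta p (qp q 2 * z) * theta p (qp q (2 * (lam + 1))))

/-- Entry `d(λ,z)` of the Andrews–Baxter–Forrester `R`-matrix. -/
def Rd (p q : ℝ) (lam z : ℂ) : ℂ :=
  theta p z * theta p (qp q (-2 * lam)) /
    (theta p (qp q 2 * z) * theta p (qp q (-2 * (lam + 1))))

/-- Coefficient `A_k(λ,z)` of the Felder–Varchenko dynamical representation `π^ω`. -/
def Ak (p q : ℝ) (om : ℂ) (k : ℕ) (lam z : ℂ) : ℂ :=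
  qp q (2 * (k : ℂ)) * theta p (qp q (-2 * (lam + 1) - 2 * (k : ℂ))) *
      theta p (z * qp q (om - 2 * (k : ℂ) + 1)) /
    (theta p (qp q (-2 * (lam + 1))) * theta p (z * qp q (om + 1)))

/-- Coefficient `B_k(λ,z)` of the Felder–Varchenko dynamical representation `π^ω`. -/
def Bk (p q : ℝ) (om : ℂ) (k : ℕ) (lam z : ℂ) : ℂ :=
  qp q (k : ℂ) * theta p (qp q 2) *
      theta p (z * qp q (-2 * (lam + 1) + om - 2 * (k : ℂ) - 1)) /
    (theta p (qp q (-2 * (lam + 1))) * theta p (z * qp q (om + 1)))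

/-- Coefficient `C_k(λ,z)` of the Felder–Varchenko dynamical representation `π^ω`;
`C_0 = 0`. -/
def Ck (p q : ℝ) (om : ℂ) (k : ℕ) (lam z : ℂ) : ℂ :=
  if k = 0 then 0
  else
    qp q (-((k : ℂ) - 1)) * theta p (qp q (2 * (k : ℂ))) *
        theta p (qp q (2 * (om - (k : ℂ) + 1))) *
        theta p (z * qp q (2 * (lam + 1) - om + 2 * (k : ℂ) - 1)) /
      (theta p (qp q 2) * theta p (qp q (2 * (lam + 1))) * theta p (z * qp q (om + 1)))

/-- Coefficient `D_k(λ,z)` of the Felder–Varchenko dynamical representation `π^ω`. -/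
def Dk (p q : ℝ) (om : ℂ) (k : ℕ) (lam z : ℂ) : ℂ :=
  theta p (qp q (-2 * (lam + 1 - om + (k : ℂ)))) * theta p (z * qp q (-om + 2 * (k : ℂ) + 1)) /
    (theta p (qp q (-2 * (lam + 1))) * theta p (z * qp q (om + 1)))

/-- `F(μ) = q^μ θ(q^{-2(μ+1)})`. -/
def Fdet (p q : ℝ) (mu : ℂ) : ℂ := qp q mu * theta p (qp q (-2 * (mu + 1)))

/-- The coefficient `C_{kl}(μ)` from the corepresentation matrix elements. -/
def Ckl (p q : ℝ) (k l : ℕ) (mu : ℂ) : ℂ :=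
  ellbin p q k l * epoch p q (qp q (2 * (mu - (l : ℂ) + 2))) l /
    epoch p q (qp q (2 * (mu + (k : ℂ) - 2 * (l : ℂ) + 2))) l

/-- The terminating balanced very-well-poised elliptic hypergeometric series
`₁₀ω₉(a₁; a₄,…,a₁₀)`, truncated at `n`. -/
def tenW9 (p q : ℝ) (n : ℕ) (a1 a4 a5 a6 a7 a8 a9 a10 : ℂ) : ℂ :=
  ∑ k ∈ Finset.range (n + 1),
    theta p (a1 * qp q (4 * (k : ℂ))) / theta p a1 *
      (epoch p q a1 k * epoch p q a4 k * epoch p q a5 k * epoch p q a6 k * epoch p q a7 k *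
        epoch p q a8 k * epoch p q a9 k * epoch p q a10 k * qp q (2 * (k : ℂ))) /
      (epoch p q (qp q 2) k * epoch p q (a1 * qp q 2 / a4) k * epoch p q (a1 * qp q 2 / a5) k *
        epoch p q (a1 * qp q 2 / a6) k * epoch p q (a1 * qp q 2 / a7) k *
        epoch p q (a1 * qp q 2 / a8) k * epoch p q (a1 * qp q 2 / a9) k *
        epoch p q (a1 * qp q 2 / a10) k)

/-- The product of all theta factors appearing in denominators of the terms of
`tenW9 p q n a1 a4 … a10` (including the `θ(a₁)` from the very-well-poised prefactor). -/
def tenW9Den (p q : ℝ) (n : ℕ) (a1 a4 a5 a6 a7 a8 a9 a10 : ℂ) : ℂ :=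
  theta p a1 * epoch p q (qp q 2) n * epoch p q (a1 * qp q 2 / a4) n *
    epoch p q (a1 * qp q 2 / a5) n * epoch p q (a1 * qp q 2 / a6) n *
    epoch p q (a1 * qp q 2 / a7) n * epoch p q (a1 * qp q 2 / a8) n *
    epoch p q (a1 * qp q 2 / a9) n * epoch p q (a1 * qp q 2 / a10) n

open Filter

lemma hasProd_zero_of_eq_zero {f : ℕ → ℂ} {j : ℕ} (h : f j = 0) : HasProd f 0 := by
  have hev : ∀ᶠ s : Finset ℕ in atTop, ∏ i ∈ s, f i = 0 := by
    filter_upwards [eventually_ge_atTop ({j} : Finset ℕ)] with s hs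
    exact Finset.prod_eq_zero (hs (Finset.mem_singleton_self j)) h
  exact (tendsto_congr' hev).mpr tendsto_const_nhds

lemma theta_mult (p : ℝ) (hp0 : 0 < p) (hp1 : p < 1) (z : ℂ) (hz : z ≠ 0) :
    Multipliable (fun j : ℕ => (1 - z * (p : ℂ) ^ j) * (1 - (p : ℂ) ^ (j + 1) / z)) := by
  set f : ℕ → ℂ := fun j => (1 - z * (p : ℂ) ^ j) * (1 - (p : ℂ) ^ (j + 1) / z) with hf
  by_cases hne : ∀ j, f j ≠ 0
  · have hpn : ‖(p : ℂ)‖ < 1 := by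
      simpa [Complex.norm_real, abs_of_pos hp0] using hp1
    have hpn2 : ‖((p : ℂ) ^ 2)‖ < 1 := by
      rw [norm_pow]
      exact pow_lt_one₀ (norm_nonneg _) hpn (by norm_num)
    have hg : Summable (fun j : ℕ => ((p : ℂ)) ^ j) :=
      summable_geometric_of_norm_lt_one hpn
    have hg2 : Summable (fun j : ℕ => ((p : ℂ) ^ 2) ^ j) :=
      summable_geometric_of_norm_lt_one hpn2
    have hsum : Summable (fun j : ℕ => f j - 1) := by
      have h3 := ((hg.mul_left (-z)).add (hg.mul_left (-((p : ℂ) / z)))).add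
        (hg2.mul_left (p : ℂ))
      refine h3.congr fun j => ?_
      simp only [hf]
      field_simp
      ring
    have h0 : Tendsto (fun j => ‖f j - 1‖) atTop (nhds 0) := by
      simpa using hsum.tendsto_atTop_zero.norm
    have hev : ∀ᶠ j in atTop, ‖f j - 1‖ ≤ 1 / 2 := by
      filter_upwards [h0.eventually_lt_const (by norm_num : (0:ℝ) < 1/2)] with j hj
      exact hj.le
    have hlog : Summable (fun j : ℕ => Complex.log (f j)) := by
      apply Summable.of_norm_bounded_eventually_nat (g := fun j => 3/2 * ‖f j - 1‖)
        ((summable_norm_iff.mpr hsum).mul_left (3/2))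
      filter_upwards [hev] with j hj
      have := Complex.norm_log_one_add_half_le_self hj
      simpa using this
    exact Complex.multipliable_of_summable_log hlog
  · push_neg at hne
    obtain ⟨j, hj⟩ := hne
    exact ⟨0, hasProd_zero_of_eq_zero hj⟩

lemma theta_key (p : ℝ) (z : ℂ) (hz : z ≠ 0) (n : ℕ) :
    (1 - (p : ℂ) ^ n / z) *
      ∏ j ∈ Finset.range n, ((1 - z⁻¹ * (p : ℂ) ^ j) * (1 - (p : ℂ) ^ (j + 1) / z⁻¹)) =
    -z⁻¹ * ((1 - (p : ℂ) ^ n * z) *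
      ∏ j ∈ Finset.range n, ((1 - z * (p : ℂ) ^ j) * (1 - (p : ℂ) ^ (j + 1) / z))) := by
  induction n with
  | zero =>
      simp only [pow_zero, Finset.range_zero, Finset.prod_empty, mul_one]
      field_simp
      ring
  | succ n ih =>
      rw [Finset.prod_range_succ, Finset.prod_range_succ]
      simp only [div_eq_mul_inv, inv_inv] at ih ⊢
      linear_combination ((1 - (p:ℂ)^(n+1)/z) * (1 - (p:ℂ)^(n+1)*z)) * ih

lemma theta_inv (p : ℝ) (hp0 : 0 < p) (hp1 : p < 1) (z : ℂ) (hz : z ≠ 0) :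
    theta p z⁻¹ = -z⁻¹ * theta p z := by
  have hf := theta_mult p hp0 hp1 z hz
  have hg := theta_mult p hp0 hp1 z⁻¹ (inv_ne_zero hz)
  have hpn : ‖(p : ℂ)‖ < 1 := by
    simpa [Complex.norm_real, abs_of_pos hp0] using hp1
  have hp : Tendsto (fun n : ℕ => ((p : ℂ)) ^ n) atTop (nhds 0) :=
    tendsto_pow_atTop_nhds_zero_of_norm_lt_one hpn
  unfold theta
  have L1 : Tendsto (fun n : ℕ => (1 - (p : ℂ) ^ n / z) *
      ∏ j ∈ Finset.range n, ((1 - z⁻¹ * (p : ℂ) ^ j) * (1 - (p : ℂ) ^ (j + 1) / z⁻¹)))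
      atTop (nhds (∏' j : ℕ, ((1 - z⁻¹ * (p : ℂ) ^ j) * (1 - (p : ℂ) ^ (j + 1) / z⁻¹)))) := by
    have h1 : Tendsto (fun n : ℕ => (1 - (p : ℂ) ^ n / z)) atTop (nhds 1) := by
      simpa using tendsto_const_nhds.sub (hp.div_const z)
    simpa only [one_mul] using h1.mul hg.hasProd.tendsto_prod_nat
  have L2 : Tendsto (fun n : ℕ => -z⁻¹ * ((1 - (p : ℂ) ^ n * z) *
      ∏ j ∈ Finset.range n, ((1 - z * (p : ℂ) ^ j) * (1 - (p : ℂ) ^ (j + 1) / z))))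
      atTop (nhds (-z⁻¹ * ∏' j : ℕ, ((1 - z * (p : ℂ) ^ j) * (1 - (p : ℂ) ^ (j + 1) / z)))) := by
    have h1 : Tendsto (fun n : ℕ => (1 - (p : ℂ) ^ n * z)) atTop (nhds 1) := by
      simpa using tendsto_const_nhds.sub (hp.mul_const z)
    simpa only [one_mul] using (tendsto_const_nhds : Tendsto (fun _ : ℕ => -z⁻¹) atTop
      (nhds (-z⁻¹))).mul (h1.mul hf.hasProd.tendsto_prod_nat)
  exact tendsto_nhds_unique ((tendsto_congr (theta_key p z hz)).mp L1) L2

/-- The identities `-c(λ+1, z/w) = b(λ, w/(q²z))/a(λ, w/(q²z))` and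
`d(λ+1, z/w) = 1/a(λ, w/(q²z))`. -/
theorem Rmatrix_shift_identities (p q : ℝ) (hp0 : 0 < p) (hp1 : p < 1)
    (hq0 : 0 < q) (hq1 : q < 1) (lam z w : ℂ) (hz : z ≠ 0) (hw : w ≠ 0)
    (h1 : theta p (qp q 2 * (z / w)) ≠ 0)
    (h2 : theta p (qp q 2 * (w / (qp q 2 * z))) ≠ 0)
    (h3 : theta p (qp q (2 * (lam + 2))) ≠ 0)
    (h4 : theta p (qp q (-2 * (lam + 2))) ≠ 0)
    (h5 : theta p (qp q (2 * (lam + 1))) ≠ 0)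
    (h6 : theta p (qp q (-2 * (lam + 1))) ≠ 0)
    (h7 : theta p (w / (qp q 2 * z)) ≠ 0) :
    -Rc p q (lam + 1) (z / w) =
        Rb p q lam (w / (qp q 2 * z)) / Ra p q lam (w / (qp q 2 * z)) ∧
      Rd p q (lam + 1) (z / w) = 1 / Ra p q lam (w / (qp q 2 * z)) := by
  have hQ : qp q 2 ≠ 0 := Complex.exp_ne_zero _
  have hB : qp q (2 * (lam + 1)) ≠ 0 := Complex.exp_ne_zero _
  have qp_mul : ∀ a b : ℂ, qp q a * qp q b = qp q (a + b) := by
    intro a b; unfold qp; rw [← Complex.exp_add]; ring_nf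
  have ht : z / w ≠ 0 := div_ne_zero hz hw
  have e2 : qp q 2 * (w / (qp q 2 * z)) = (z / w)⁻¹ := by field_simp
  have r1 : qp q (2 * (lam + 1 + 1)) = qp q 2 * qp q (2 * (lam + 1)) := by
    rw [qp_mul]; congr 1; ring
  have r2 : qp q (2 * (lam + 2)) = qp q 2 * qp q (2 * (lam + 1)) := by
    rw [qp_mul]; congr 1; ring
  have enB : qp q (-2 * (lam + 1)) = (qp q (2 * (lam + 1)))⁻¹ := by
    refine eq_inv_of_mul_eq_one_left ?_
    rw [qp_mul]
    have h : (-2 * (lam + 1) + 2 * (lam + 1)) = 0 := by ring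
    rw [h]; simp [qp]
  have enA : qp q (-2 * (lam + 1 + 1)) = (qp q 2 * qp q (2 * (lam + 1)))⁻¹ := by
    rw [← r1]
    refine eq_inv_of_mul_eq_one_left ?_
    rw [qp_mul]
    have h : (-2 * (lam + 1 + 1) + 2 * (lam + 1 + 1)) = 0 := by ring
    rw [h]; simp [qp]
  have e5 : w / (qp q 2 * z) = (qp q 2 * (z / w))⁻¹ := by
    rw [mul_div_assoc', inv_div]
  have earg : qp q (-2 * (lam + 1)) * (w / (qp q 2 * z)) =
      (qp q 2 * qp q (2 * (lam + 1)) * (z / w))⁻¹ := by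
    rw [enB, e5, ← mul_inv]
    congr 1
    ring
  have r3 : theta p (qp q (-2 * (lam + 1)) * (w / (qp q 2 * z))) =
      -(qp q 2 * qp q (2 * (lam + 1)) * (z / w))⁻¹ *
        theta p (qp q 2 * qp q (2 * (lam + 1)) * (z / w)) := by
    rw [earg, theta_inv p hp0 hp1 _ (by exact mul_ne_zero (mul_ne_zero hQ hB) ht)]
  have r4 : theta p (qp q 2 * (w / (qp q 2 * z))) = -(z / w)⁻¹ * theta p (z / w) := by
    rw [e2, show ((z / w)⁻¹ : ℂ) = ((z / w))⁻¹ from rfl,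
      theta_inv p hp0 hp1 _ ht]
  have r5 : theta p (w / (qp q 2 * z)) =
      -(qp q 2 * (z / w))⁻¹ * theta p (qp q 2 * (z / w)) := by
    rw [e5, theta_inv p hp0 hp1 _ (mul_ne_zero hQ ht)]
  have r6 : theta p (qp q (-2 * (lam + 1))) =
      -(qp q (2 * (lam + 1)))⁻¹ * theta p (qp q (2 * (lam + 1))) := by
    rw [enB, theta_inv p hp0 hp1 _ hB]
  have r7 : theta p (qp q (-2 * (lam + 1 + 1))) =
      -(qp q 2 * qp q (2 * (lam + 1)))⁻¹ *
        theta p (qp q 2 * qp q (2 * (lam + 1))) := by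
    rw [enA, theta_inv p hp0 hp1 _ (mul_ne_zero hQ hB)]
  rw [r2] at h3
  rw [r4] at h2
  have htnz : theta p (z / w) ≠ 0 := by
    rcases mul_ne_zero_iff.mp h2 with ⟨-, h⟩; exact h
  unfold Ra Rb Rc Rd
  rw [r1, r3, r4, r5, r6, r7, r2]
  set t := z / w with hts
  set Qv := qp q 2 with hQs
  set Bv := qp q (2 * (lam + 1)) with hBs
  set T1 := theta p t with hT1
  set T2 := theta p (Qv * t) with hT2
  set T3 := theta p (Qv * Bv * t) with hT3
  set TQ := theta p Qv with hTQ
  set TA := theta p (Qv * Bv) with hTA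
  set TB := theta p Bv with hTB
  clear_value t Qv Bv T1 T2 T3 TQ TA TB
  constructor
  · field_simp [hQ, hB, ht, h1, h3, h5, htnz]
  · field_simp [hQ, hB, ht, h1, h3, h5, htnz]

end
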